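/- If a commutative reduced ring R has only finitely many minimal prime ideals, then R has no sd-ideal. -/

import Mathlib

/-- The minimal prime spectrum of `R`, with the subspace (Zariski) topology. -/
abbrev MinSpec (R : Type*) [CommRing R] :=
  {P : PrimeSpectrum R // P.asIdeal ∈ minimalPrimes R}

/-- A reduced ring with finitely many minimal primes has no sd-ideal. -/
theorem no_sd_of_finitely_many_min_primes (R : Type*) [CommRing R] [IsReduced R]
    (h : (minimalPrimes R).Finite) :
    ¬ ∃ I : Ideal R, (∀ x ∈ I, x ∉ nonZeroDivisors R) ∧
      ∀ P ∈ minimalPrimes R, ¬ I ≤ P := by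
  rintro ⟨I, hZ, hP⟩
  have key : (I : Set R) ⊆ ⋃ P ∈ h.toFinset, (P : Set R) := by
    intro x hx
    have hx' := hZ x hx
    rw [mem_nonZeroDivisors_iff_right] at hx'
    push_neg at hx'
    obtain ⟨y, hyx, hy⟩ := hx'
    have hy' : ∃ P ∈ minimalPrimes R, y ∉ P := by
      by_contra hc
      push_neg at hc
      have hmem : y ∈ sInf (minimalPrimes R) := Ideal.mem_sInf.mpr fun {J} hJ => hc J hJ
      rw [show minimalPrimes R = (⊥ : Ideal R).minimalPrimes from rfl,
        Ideal.sInf_minimalPrimes] at hmem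
      have : IsNilpotent y := by
        obtain ⟨n, hn⟩ := Ideal.mem_radical_iff.mp hmem
        exact ⟨n, by simpa using hn⟩
      exact hy this.eq_zero
    obtain ⟨P, hPmin, hyP⟩ := hy'
    have hPprime : P.IsPrime := hPmin.1.1
    have hxP : x ∈ P := by
      rcases hPprime.mem_or_mem (show y * x ∈ P by rw [hyx]; exact P.zero_mem) with hc | hc
      · exact absurd hc hyP
      · exact hc
    exact Set.mem_biUnion (h.mem_toFinset.mpr hPmin) hxP
  obtain ⟨P, hPs, hle⟩ := (Ideal.subset_union_prime (f := fun P : Ideal R => P)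
    (⊥ : Ideal R) (⊥ : Ideal R)
    (fun P hPs _ _ => ((h.mem_toFinset.mp hPs).1.1 : P.IsPrime))).mp key
  exact hP P (h.mem_toFinset.mp hPs) hle
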